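/- Let G be a 2-connected, claw-heavy, non-Hamiltonian graph on n vertices, C a longest cycle of G with a fixed orientation, R a component of G − V(C), and v_i, v_j distinct vertices of C joined by a path with all internal vertices in R. Then v_i⁻v_i⁺ ∈ Ẽ(G) and v_j⁻v_j⁺ ∈ Ẽ(G); moreover at least one of v_i⁻v_i⁺, v_j⁻v_j⁺ is an actual edge of G. -/

import Mathlib

open SimpleGraph

/-- A vertex is heavy if its degree is at least half the number of vertices. -/
def Heavy {V : Type*} [Fintype V] (G : SimpleGraph V) (v : V) : Prop :=
  Fintype.card V ≤ 2 * (G.neighborSet v).ncard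

/-- `{x,y} ∈ Ẽ(G)`: distinct vertices that are adjacent or have degree sum at least `n`. -/
def TEdge {V : Type*} [Fintype V] (G : SimpleGraph V) (x y : V) : Prop :=
  x ≠ y ∧ (G.Adj x y ∨
    Fintype.card V ≤ (G.neighborSet x).ncard + (G.neighborSet y).ncard)

/-- `a` is the center and `b,c,d` the end vertices of an induced claw `K_{1,3}`. -/
def IsClaw {V : Type*} (G : SimpleGraph V) (a b c d : V) : Prop :=
  G.Adj a b ∧ G.Adj a c ∧ G.Adj a d ∧
    ¬ G.Adj b c ∧ ¬ G.Adj b d ∧ ¬ G.Adj c d ∧ b ≠ c ∧ b ≠ d ∧ c ≠ d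

/-- Every claw has at least one heavy end vertex. -/
def OneHeavy {V : Type*} [Fintype V] (G : SimpleGraph V) : Prop :=
  ∀ a b c d, IsClaw G a b c d → Heavy G b ∨ Heavy G c ∨ Heavy G d

/-- Every claw has at least two heavy end vertices. -/
def TwoHeavy {V : Type*} [Fintype V] (G : SimpleGraph V) : Prop :=
  ∀ a b c d, IsClaw G a b c d →
    (Heavy G b ∧ Heavy G c) ∨ (Heavy G b ∧ Heavy G d) ∨ (Heavy G c ∧ Heavy G d)

/-- Every claw has two end vertices with degree sum at least `n`. -/
def ClawHeavy {V : Type*} [Fintype V] (G : SimpleGraph V) : Prop :=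
  ∀ a b c d, IsClaw G a b c d →
    Fintype.card V ≤ (G.neighborSet b).ncard + (G.neighborSet c).ncard ∨
    Fintype.card V ≤ (G.neighborSet b).ncard + (G.neighborSet d).ncard ∨
    Fintype.card V ≤ (G.neighborSet c).ncard + (G.neighborSet d).ncard

/-- `G` contains no induced claw. -/
def ClawFree {V : Type*} (G : SimpleGraph V) : Prop :=
  ∀ a b c d, ¬ IsClaw G a b c d

/-- Almost distance-hereditary: in every connected induced subgraph the distance
between two vertices exceeds their distance in `G` by at most one. -/
def AlmostDH {V : Type*} (G : SimpleGraph V) : Prop :=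
  ∀ s : Set V, (G.induce s).Connected →
    ∀ x y : s, (G.induce s).dist x y ≤ G.dist (x : V) (y : V) + 1

/-- Distance-hereditary: every connected induced subgraph preserves distances. -/
def DistHered {V : Type*} (G : SimpleGraph V) : Prop :=
  ∀ s : Set V, (G.induce s).Connected →
    ∀ x y : s, (G.induce s).dist x y = G.dist (x : V) (y : V)

/-- A cycle in `G`, encoded as an injective cyclic sequence of `m ≥ 3` pairwise
adjacent-in-order vertices. -/
def IsCycleMap {V : Type*} (G : SimpleGraph V) (m : ℕ) (f : ZMod m → V) : Prop :=
  3 ≤ m ∧ Function.Injective f ∧ ∀ i, G.Adj (f i) (f (i + 1))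

/-- A longest cycle of `G`. -/
def IsLongestCycleMap {V : Type*} (G : SimpleGraph V) (m : ℕ) (f : ZMod m → V) : Prop :=
  IsCycleMap G m f ∧ ∀ (m' : ℕ) (f' : ZMod m' → V), IsCycleMap G m' f' → m' ≤ m

/-- `R` is a connected component of the subgraph of `G` induced on `W`. -/
def IsCompOf {V : Type*} (G : SimpleGraph V) (W R : Set V) : Prop :=
  R.Nonempty ∧ R ⊆ W ∧ (G.induce R).Connected ∧
    ∀ x ∈ R, ∀ y ∈ W, G.Adj x y → y ∈ R

set_option linter.unusedSectionVars false

namespace Lemma3Aux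

open List

variable {V : Type*} [DecidableEq V] {G : SimpleGraph V} {m : ℕ} {f : ZMod m → V}

lemma natCast_ne_zmod {j1 j2 : ℕ} (h1 : j1 < j2) (h2 : j2 < m + j1) :
    (j1 : ZMod m) ≠ (j2 : ZMod m) := by
  intro h
  have h0 : ((j2 - j1 : ℕ) : ZMod m) = 0 := by
    rw [Nat.cast_sub h1.le, ← h, sub_self]
  have hd := (ZMod.natCast_eq_zero_iff _ _).mp h0
  have := Nat.le_of_dvd (by omega) hd
  omega

lemma findex_ne (hfi : Function.Injective f) {c : ZMod m} {j1 j2 : ℕ}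
    (h1 : j1 < j2) (h2 : j2 < m + j1) : f (c + j1) ≠ f (c + j2) :=
  fun h => natCast_ne_zmod h1 h2 (add_left_cancel (hfi h))

/-- bound from longest cycle: any nodup closed adjacency list has length ≤ m. -/
lemma le_of_cycleList (hC : IsLongestCycleMap G m f)
    (l : List V) (h3 : 3 ≤ l.length) (hnd : l.Nodup) (hch : l.Chain' G.Adj)
    (hne : l ≠ []) (hcl : G.Adj (l.getLast hne) (l.head hne)) : l.length ≤ m := by
  haveI : NeZero l.length := ⟨by omega⟩
  refine hC.2 l.length (fun i => l.get ⟨i.val, ZMod.val_lt i⟩) ⟨h3, ?_, ?_⟩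
  · intro i j hij
    have := (List.nodup_iff_injective_get.mp hnd) hij
    have hv : i.val = j.val := congrArg Fin.val this
    exact ZMod.val_injective _ hv
  · intro i
    have hv := ZMod.val_lt i
    haveI : Fact (1 < l.length) := ⟨by omega⟩
    by_cases h : i.val + 1 < l.length
    · have hv1 : (i + 1).val = i.val + 1 := by
        rw [ZMod.val_add, ZMod.val_one, Nat.mod_eq_of_lt h]
      have := List.isChain_iff_getElem.mp hch i.val (by omega)
      simp only [hv1]
      convert this using 2 <;> rfl
    · have hval : i.val = l.length - 1 := by omega
      have hv1 : (i + 1).val = 0 := by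
        rw [ZMod.val_add, ZMod.val_one, hval, Nat.sub_add_cancel (by omega), Nat.mod_self]
      have hgl : l.get ⟨i.val, ZMod.val_lt i⟩ = l.getLast hne := by
        rw [List.getLast_eq_getElem]
        simp only [List.get_eq_getElem, hval]
      have hhd : l.get ⟨(i+1).val, ZMod.val_lt _⟩ = l.head hne := by
        rw [List.head_eq_getElem]
        simp only [List.get_eq_getElem, hv1]
      show G.Adj (l.get ⟨i.val, ZMod.val_lt i⟩) (l.get ⟨(i+1).val, ZMod.val_lt _⟩)
      rw [hgl, hhd]
      exact hcl


/-- forward arc along the cycle -/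
def arcU (f : ZMod m → V) (c : ZMod m) (k : ℕ) : List V :=
  (List.range k).map fun t : ℕ => f (c + (t : ZMod m))

/-- backward arc along the cycle -/
def arcD (f : ZMod m → V) (c : ZMod m) (k : ℕ) : List V :=
  (List.range k).map fun t : ℕ => f (c - (t : ZMod m))

@[simp] lemma length_arcU (c : ZMod m) (k : ℕ) : (arcU f c k).length = k := by rw [arcU, List.length_map, List.length_range]
@[simp] lemma length_arcD (c : ZMod m) (k : ℕ) : (arcD f c k).length = k := by rw [arcD, List.length_map, List.length_range]

lemma arcU_ne_nil {c : ZMod m} {k : ℕ} (hk : k ≠ 0) : arcU f c k ≠ [] := by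
  intro h; have := congrArg List.length h; simp at this; omega

lemma arcD_ne_nil {c : ZMod m} {k : ℕ} (hk : k ≠ 0) : arcD f c k ≠ [] := by
  intro h; have := congrArg List.length h; simp at this; omega

lemma getElem_arcU {c : ZMod m} {k t : ℕ} (ht : t < k) :
    (arcU f c k)[t]'(by simp [ht]) = f (c + t) := by simp only [arcU, List.getElem_map, List.getElem_range]

lemma getElem_arcD {c : ZMod m} {k t : ℕ} (ht : t < k) :
    (arcD f c k)[t]'(by simp [ht]) = f (c - t) := by simp only [arcD, List.getElem_map, List.getElem_range]

lemma head_arcU {c : ZMod m} {k : ℕ} (hk : k ≠ 0) :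
    (arcU f c k).head (arcU_ne_nil hk) = f c := by
  rw [List.head_eq_getElem]
  have := getElem_arcU (f := f) (c := c) (Nat.pos_of_ne_zero hk)
  simpa using this

lemma head_arcD {c : ZMod m} {k : ℕ} (hk : k ≠ 0) :
    (arcD f c k).head (arcD_ne_nil hk) = f c := by
  rw [List.head_eq_getElem]
  have := getElem_arcD (f := f) (c := c) (Nat.pos_of_ne_zero hk)
  simpa using this

lemma getLast_arcU {c : ZMod m} {k : ℕ} (hk : k ≠ 0) :
    (arcU f c k).getLast (arcU_ne_nil hk) = f (c + (k - 1 : ℕ)) := by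
  rw [List.getLast_eq_getElem]
  have := getElem_arcU (f := f) (c := c) (k := k) (t := k - 1) (by omega)
  simpa using this

lemma getLast_arcD {c : ZMod m} {k : ℕ} (hk : k ≠ 0) :
    (arcD f c k).getLast (arcD_ne_nil hk) = f (c - (k - 1 : ℕ)) := by
  rw [List.getLast_eq_getElem]
  have := getElem_arcD (f := f) (c := c) (k := k) (t := k - 1) (by omega)
  simpa using this

lemma mem_arcU {c : ZMod m} {k : ℕ} {x : V} :
    x ∈ arcU f c k ↔ ∃ t, t < k ∧ x = f (c + t) := by
  simp only [arcU, List.mem_map, List.mem_range]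
  exact ⟨fun ⟨t, ht, he⟩ => ⟨t, ht, he.symm⟩, fun ⟨t, ht, he⟩ => ⟨t, ht, he.symm⟩⟩

lemma mem_arcD {c : ZMod m} {k : ℕ} {x : V} :
    x ∈ arcD f c k ↔ ∃ t, t < k ∧ x = f (c - t) := by
  simp only [arcD, List.mem_map, List.mem_range]
  exact ⟨fun ⟨t, ht, he⟩ => ⟨t, ht, he.symm⟩, fun ⟨t, ht, he⟩ => ⟨t, ht, he.symm⟩⟩

lemma chain'_arcU (hadj : ∀ i, G.Adj (f i) (f (i + 1))) (c : ZMod m) (k : ℕ) :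
    (arcU f c k).Chain' G.Adj := by
  refine List.isChain_iff_getElem.mpr ?_
  intro i h
  simp only [length_arcU] at h
  simp only [List.get_eq_getElem, getElem_arcU (show i < k by omega),
    getElem_arcU (show i + 1 < k by omega)]
  have : ((i + 1 : ℕ) : ZMod m) = (i : ZMod m) + 1 := by push_cast; ring
  rw [this, ← add_assoc]
  exact hadj _

lemma chain'_arcD (hadj : ∀ i, G.Adj (f i) (f (i + 1))) (c : ZMod m) (k : ℕ) :
    (arcD f c k).Chain' G.Adj := by
  refine List.isChain_iff_getElem.mpr ?_
  intro i h
  simp only [length_arcD] at h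
  simp only [List.get_eq_getElem, getElem_arcD (show i < k by omega),
    getElem_arcD (show i + 1 < k by omega)]
  have h1 : c - ((i + 1 : ℕ) : ZMod m) = (c - i) - 1 := by push_cast; ring
  rw [h1]
  have := (hadj (c - i - 1)).symm
  rwa [sub_add_cancel] at this

lemma nodup_arcU (hfi : Function.Injective f) {c : ZMod m} {k : ℕ} (hk : k ≤ m) :
    (arcU f c k).Nodup := by
  rw [arcU]
  apply List.Nodup.map_on _ (List.nodup_range)
  intro t1 h1 t2 h2 he
  simp only [List.mem_range] at h1 h2
  by_contra hne
  rcases Nat.lt_or_ge t1 t2 with h | h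
  · exact findex_ne hfi h (by omega) he
  · exact findex_ne hfi (by omega) (by omega) he.symm

lemma nodup_arcD (hfi : Function.Injective f) {c : ZMod m} {k : ℕ} (hk : k ≤ m) :
    (arcD f c k).Nodup := by
  rw [arcD]
  apply List.Nodup.map_on _ (List.nodup_range)
  intro t1 h1 t2 h2 he
  simp only [List.mem_range] at h1 h2
  by_contra hne
  have key : ∀ t1 t2 : ℕ, t1 < t2 → t2 < k → f (c - t1) = f (c - t2) → False := by
    intro s1 s2 hlt h2k he2
    have : c - s1 = (c - s2) + ((s2 - s1 : ℕ) : ZMod m) := by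
      push_cast [Nat.cast_sub hlt.le]; ring
    have he3 : f ((c - s2) + (0 : ℕ)) = f ((c - s2) + ((s2 - s1 : ℕ))) := by
      rw [← this]; simpa using he2.symm
    exact findex_ne hfi (by omega) (by omega) he3
  rcases Nat.lt_or_ge t1 t2 with h | h
  · exact key t1 t2 h h2 he
  · exact key t2 t1 (by omega) h1 he.symm


lemma lastVal {l : List V} (hne : l ≠ []) {x : V} (h : l.getLast? = some x) :
    l.getLast hne = x := by
  rw [List.getLast?_eq_getLast_of_ne_nil hne] at h
  exact Option.some_injective _ h

lemma headVal {l : List V} (hne : l ≠ []) {x : V} (h : l.head? = some x) :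
    l.head hne = x := by
  rw [List.head?_eq_head hne] at h
  exact Option.some_injective _ h

lemma getLast?_arcU {c : ZMod m} {k : ℕ} (hk : k ≠ 0) :
    (arcU f c k).getLast? = some (f (c + (k - 1 : ℕ))) := by
  rw [List.getLast?_eq_getLast_of_ne_nil (arcU_ne_nil hk), getLast_arcU hk]

lemma getLast?_arcD {c : ZMod m} {k : ℕ} (hk : k ≠ 0) :
    (arcD f c k).getLast? = some (f (c - (k - 1 : ℕ))) := by
  rw [List.getLast?_eq_getLast_of_ne_nil (arcD_ne_nil hk), getLast_arcD hk]

lemma head?_arcU {c : ZMod m} {k : ℕ} (hk : k ≠ 0) :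
    (arcU f c k).head? = some (f c) := by
  rw [List.head?_eq_head (arcU_ne_nil hk), head_arcU hk]

lemma head?_arcD {c : ZMod m} {k : ℕ} (hk : k ≠ 0) :
    (arcD f c k).head? = some (f c) := by
  rw [List.head?_eq_head (arcD_ne_nil hk), head_arcD hk]

/-- a path inside R between two vertices of R -/
lemma exists_pathR {R : Set V} (hR : IsCompOf G (Set.range f)ᶜ R) {x y : V}
    (hx : x ∈ R) (hy : y ∈ R) :
    ∃ q : G.Walk x y, q.IsPath ∧ ∀ z ∈ q.support, z ∈ R := by
  obtain ⟨w⟩ := hR.2.2.1 ⟨x, hx⟩ ⟨y, hy⟩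
  let w' : G.Walk x y := w.map (SimpleGraph.Embedding.induce R).toHom
  refine ⟨w'.toPath, w'.toPath.2, ?_⟩
  intro z hz
  have hz' := SimpleGraph.Walk.support_toPath_subset w' hz
  replace hz' : z ∈ w.support.map (SimpleGraph.Embedding.induce (G := G) R).toHom := by
    rw [← SimpleGraph.Walk.support_map]; exact hz'
  rw [List.mem_map] at hz'
  obtain ⟨⟨z', hz'R⟩, _, rfl⟩ := hz'
  exact hz'R

section Kcore

variable (hC : IsLongestCycleMap G m f)
include hC

lemma basicfacts : 3 ≤ m ∧ Function.Injective f ∧ (∀ i, G.Adj (f i) (f (i + 1))) :=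
  ⟨hC.1.1, hC.1.2.1, hC.1.2.2⟩

/-- K1: a vertex off the cycle cannot be adjacent to two consecutive cycle vertices. -/
lemma K1 {u : V} (hu : u ∉ Set.range f) {c : ZMod m}
    (h1 : G.Adj u (f c)) (h2 : G.Adj u (f (c + 1))) : False := by
  obtain ⟨hm3, hfi, hadj⟩ := basicfacts hC
  set l : List V := u :: arcU f (c + 1) m with hl
  have hlen : l.length = m + 1 := by simp [hl]
  have harcne : arcU f (c+1) m ≠ [] := arcU_ne_nil (by omega)
  have hne : l ≠ [] := by simp [hl]
  have hnd : l.Nodup := by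
    rw [hl, List.nodup_cons]
    refine ⟨?_, nodup_arcU hfi le_rfl⟩
    intro hmem
    obtain ⟨t, _, he⟩ := mem_arcU.mp hmem
    exact hu ⟨_, he.symm⟩
  have hch : l.Chain' G.Adj := by
    rw [hl]
    refine List.IsChain.cons (chain'_arcU hadj _ _) ?_
    intro y hy
    rw [List.head?_eq_head harcne] at hy
    rw [head_arcU (by omega)] at hy
    cases hy
    exact h2
  have hcl : G.Adj (l.getLast hne) (l.head hne) := by
    have h1' : l.getLast hne = f c := by
      apply lastVal
      rw [hl]
      show ([u] ++ arcU f (c+1) m).getLast? = _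
      rw [List.getLast?_append_of_ne_nil _ harcne, getLast?_arcU (by omega)]
      congr 2
      have : ((m - 1 : ℕ) : ZMod m) = ((m : ℕ) : ZMod m) - 1 := by
        rw [Nat.cast_sub (by omega)]; norm_num
      rw [this, ZMod.natCast_self]
      ring
    have h2' : l.head hne = u := rfl
    rw [h1', h2']
    exact h1.symm
  have := le_of_cycleList hC l (by omega) hnd hch hne hcl
  omega


omit hC in
lemma castm1 (hm : 1 ≤ m) : ((m - 1 : ℕ) : ZMod m) = -1 := by
  rw [Nat.cast_sub hm, ZMod.natCast_self]; norm_num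

/-- K2: a vertex of the cycle with a neighbour in `R` : the next cycle vertex has no
neighbour in `R`. -/
lemma K2 {R : Set V} (hR : IsCompOf G (Set.range f)ᶜ R) {x0 r : V} (hx0 : x0 ∈ R)
    {c : ZMod m} (hadjc : G.Adj (f c) x0) (hr : r ∈ R) (hadjr : G.Adj r (f (c + 1))) :
    False := by
  obtain ⟨hm3, hfi, hadj⟩ := basicfacts hC
  obtain ⟨Q, hQp, hQR⟩ := exists_pathR hR hx0 hr
  have hQne : Q.support ≠ [] := Q.support_ne_nil
  have hAne : arcU f (c+1) (m-1) ≠ [] := arcU_ne_nil (by omega)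
  set l : List V := f c :: (Q.support ++ arcU f (c+1) (m-1)) with hl
  have hRrange : ∀ z ∈ R, z ∉ Set.range f := fun z hz => hR.2.1 hz
  have hnd : l.Nodup := by
    rw [hl, List.nodup_cons, List.nodup_append]
    refine ⟨?_, hQp.support_nodup, nodup_arcU hfi (by omega), ?_⟩
    · intro hmem
      rcases List.mem_append.mp hmem with h | h
      · exact hRrange _ (hQR _ h) ⟨c, rfl⟩
      · obtain ⟨t, ht, he⟩ := mem_arcU.mp h
        have e1 : c + ((0:ℕ):ZMod m) = c := by norm_num
        have e2 : c + ((1 + t : ℕ) : ZMod m) = c + 1 + (t:ZMod m) := by push_cast; ring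
        exact findex_ne hfi (show 0 < 1 + t by omega) (by omega) (by rw [e1, e2, ← he])
    · intro z hz _y hz2 hxy; rw [← hxy] at hz2
      obtain ⟨t, ht, he⟩ := mem_arcU.mp hz2
      exact hRrange _ (hQR _ hz) ⟨_, he.symm⟩
  have hch : l.Chain' G.Adj := by
    rw [hl]
    refine List.IsChain.cons ?_ ?_
    · refine List.IsChain.append Q.isChain_adj_support (chain'_arcU hadj _ _) ?_
      intro x hx y hy
      rw [List.getLast?_eq_getLast_of_ne_nil hQne, Q.getLast_support] at hx
      rw [head?_arcU (by omega)] at hy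
      cases hx; cases hy
      exact hadjr
    · intro y hy
      rw [List.head?_append_of_ne_nil _ hQne, List.head?_eq_head hQne,
        Q.head_support] at hy
      cases hy
      exact hadjc
  have hne : l ≠ [] := by simp [hl]
  have hcl : G.Adj (l.getLast hne) (l.head hne) := by
    have h1' : l.getLast hne = f (c - 1) := by
      apply lastVal
      rw [hl]
      show ((f c :: Q.support) ++ arcU f (c+1) (m-1)).getLast? = _
      rw [List.getLast?_append_of_ne_nil _ hAne, getLast?_arcU (by omega)]
      congr 2
      have : ((m - 1 - 1 : ℕ) : ZMod m) = -1 - 1 := by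
        rw [show m - 1 - 1 = m - 2 by omega, Nat.cast_sub (by omega : 2 ≤ m),
          ZMod.natCast_self]
        push_cast; ring
      rw [this]; ring
    have h2' : l.head hne = f c := rfl
    rw [h1', h2']
    have := hadj (c - 1)
    rwa [sub_add_cancel] at this
  have hle := le_of_cycleList hC l (by
      rw [hl]; simp only [List.length_cons, List.length_append, length_arcU]
      omega) hnd hch hne hcl
  rw [hl] at hle
  simp only [List.length_cons, List.length_append, length_arcU] at hle
  have : Q.support.length = Q.length + 1 := Q.length_support
  omega

/-- K3: crossing chord with the off-cycle vertex u. -/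
lemma K3 {u : V} (hu : u ∉ Set.range f) {c : ZMod m} (h0 : G.Adj (f c) u)
    {t : ℕ} (ht1 : 1 ≤ t) (ht2 : t ≤ m - 2)
    (h1 : G.Adj u (f (c + (t : ℕ)))) (h2 : G.Adj (f (c + 1)) (f (c + (t : ℕ) + 1))) :
    False := by
  obtain ⟨hm3, hfi, hadj⟩ := basicfacts hC
  have hDne : arcD f (c + (t:ℕ)) t ≠ [] := arcD_ne_nil (by omega)
  have hAne : arcU f (c + (t:ℕ) + 1) (m - 1 - t) ≠ [] := arcU_ne_nil (by omega)
  set l : List V := f c :: u :: (arcD f (c + (t:ℕ)) t ++ arcU f (c + (t:ℕ) + 1) (m - 1 - t))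
    with hl
  -- index form of arc members
  have memD : ∀ x ∈ arcD f (c + (t:ℕ)) t, ∃ j, 1 ≤ j ∧ j ≤ t ∧ x = f (c + (j:ℕ)) := by
    intro x hx
    obtain ⟨s, hs, he⟩ := mem_arcD.mp hx
    refine ⟨t - s, by omega, by omega, ?_⟩
    rw [he]; congr 1
    rw [Nat.cast_sub (by omega : s ≤ t)]; ring
  have memU : ∀ x ∈ arcU f (c + (t:ℕ) + 1) (m - 1 - t),
      ∃ j, t + 1 ≤ j ∧ j ≤ m - 1 ∧ x = f (c + (j:ℕ)) := by
    intro x hx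
    obtain ⟨s, hs, he⟩ := mem_arcU.mp hx
    refine ⟨t + 1 + s, by omega, by omega, ?_⟩
    rw [he]; congr 1
    push_cast; ring
  have hnd : l.Nodup := by
    rw [hl, List.nodup_cons, List.nodup_cons, List.nodup_append]
    refine ⟨?_, ?_, nodup_arcD hfi (by omega), nodup_arcU hfi (by omega), ?_⟩
    · intro hmem
      rcases List.mem_cons.mp hmem with h | hmem
      · exact hu ⟨c, h⟩
      rcases List.mem_append.mp hmem with h | h
      · obtain ⟨j, hj1, hj2, he⟩ := memD _ h
        have e1 : c + ((0:ℕ):ZMod m) = c := by norm_num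
        exact findex_ne hfi (show 0 < j by omega) (by omega) (by rw [e1, ← he])
      · obtain ⟨j, hj1, hj2, he⟩ := memU _ h
        have e1 : c + ((0:ℕ):ZMod m) = c := by norm_num
        exact findex_ne hfi (show 0 < j by omega) (by omega) (by rw [e1, ← he])
    · intro hmem
      rcases List.mem_append.mp hmem with h | h
      · obtain ⟨j, _, _, he⟩ := memD _ h
        exact hu ⟨_, he.symm⟩
      · obtain ⟨j, _, _, he⟩ := memU _ h
        exact hu ⟨_, he.symm⟩
    · intro z hz _y hz2 hxy; rw [← hxy] at hz2
      obtain ⟨j, hj1, hj2, he⟩ := memD _ hz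
      obtain ⟨j', hj1', hj2', he'⟩ := memU _ hz2
      rw [he] at he'
      exact findex_ne hfi (show j < j' by omega) (by omega) he'
  have hch : l.Chain' G.Adj := by
    rw [hl]
    refine List.IsChain.cons (List.IsChain.cons ?_ ?_) ?_
    · refine List.IsChain.append (chain'_arcD hadj _ _) (chain'_arcU hadj _ _) ?_
      intro x hx y hy
      rw [getLast?_arcD (by omega)] at hx
      rw [head?_arcU (by omega)] at hy
      cases hx; cases hy
      have he : c + (t:ℕ) - ((t - 1 : ℕ) : ZMod m) = c + 1 := by
        rw [Nat.cast_sub (by omega : 1 ≤ t)]; push_cast; ring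
      rw [he]
      exact h2
    · intro y hy
      rw [List.head?_append_of_ne_nil _ hDne, head?_arcD (by omega)] at hy
      cases hy
      exact h1
    · intro y hy
      cases hy
      exact h0
  have hne : l ≠ [] := by simp [hl]
  have hcl : G.Adj (l.getLast hne) (l.head hne) := by
    have h1' : l.getLast hne = f (c - 1) := by
      apply lastVal
      rw [hl]
      show ((f c :: u :: arcD f (c + (t:ℕ)) t) ++ arcU f (c + (t:ℕ) + 1) (m - 1 - t)).getLast? = _
      rw [List.getLast?_append_of_ne_nil _ hAne, getLast?_arcU (by omega)]
      congr 2
      have : ((m - 1 - t - 1 : ℕ) : ZMod m) = ((m : ℕ) : ZMod m) - (t:ℕ) - 2 := by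
        rw [show m - 1 - t - 1 = m - (t + 2) by omega,
          Nat.cast_sub (by omega : t + 2 ≤ m)]
        push_cast; ring
      rw [this, ZMod.natCast_self]
      ring
    have h2' : l.head hne = f c := rfl
    rw [h1', h2']
    have := hadj (c - 1)
    rwa [sub_add_cancel] at this
  have hle := le_of_cycleList hC l (by
      rw [hl]
      simp only [List.length_cons, List.length_append, length_arcU, length_arcD]
      omega) hnd hch hne hcl
  rw [hl] at hle
  simp only [List.length_cons, List.length_append, length_arcU, length_arcD] at hle
  omega


/-- Count A : `d(u) + d(v⁺) < n` for `u ∈ R` attached at `v = f c`. -/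
lemma CntA [Fintype V] {R : Set V} (hR : IsCompOf G (Set.range f)ᶜ R) {u : V}
    (hu : u ∈ R) {c : ZMod m} (hadjc : G.Adj (f c) u) :
    (G.neighborSet u).ncard + (G.neighborSet (f (c + 1))).ncard + 1 ≤ Fintype.card V := by
  obtain ⟨hm3, hfi, hadj⟩ := basicfacts hC
  haveI : NeZero m := ⟨by omega⟩
  have hunr : u ∉ Set.range f := hR.2.1 hu
  set y := f (c + 1) with hy
  have hNoRy : ∀ r ∈ R, ¬ G.Adj y r := fun r hr hadjr =>
    K2 hC hR hu hadjc hr hadjr.symm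
  classical
  set σ : V → V := fun w => if h : ∃ i, f i = w then f (Classical.choose h + 1) else w
    with hσ
  have hσrange : ∀ i, σ (f i) = f (i + 1) := by
    intro i
    have h : ∃ j, f j = f i := ⟨i, rfl⟩
    have hc : Classical.choose h = i := hfi (Classical.choose_spec h)
    simp only [hσ, dif_pos h, hc]
  have hσid : ∀ w, w ∉ Set.range f → σ w = w := by
    intro w hw
    have h : ¬ ∃ i, f i = w := fun ⟨i, hi⟩ => hw ⟨i, hi⟩
    simp only [hσ, dif_neg h]
  have hNu_class : ∀ w ∈ G.neighborSet u, w ∈ Set.range f ∨ w ∈ R := by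
    intro w hw
    by_cases h : w ∈ Set.range f
    · exact Or.inl h
    · exact Or.inr (hR.2.2.2 u hu w h hw)
  set S : Set V := insert u (σ '' (G.neighborSet u)) with hS
  have hinj : Set.InjOn σ (G.neighborSet u) := by
    intro w1 h1 w2 h2 he
    rcases hNu_class w1 h1 with ⟨i1, rfl⟩ | hR1 <;>
      rcases hNu_class w2 h2 with ⟨i2, rfl⟩ | hR2
    · rw [hσrange, hσrange] at he
      exact congrArg f (add_right_cancel (hfi he))
    · rw [hσrange, hσid _ (hR.2.1 hR2)] at he
      exact absurd (he ▸ Set.mem_range_self (i1 + 1)) (hR.2.1 hR2)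
    · rw [hσrange, hσid _ (hR.2.1 hR1)] at he
      exact absurd (he ▸ Set.mem_range_self (i2 + 1)) (hR.2.1 hR1)
    · rwa [hσid _ (hR.2.1 hR1), hσid _ (hR.2.1 hR2)] at he
  have hunotimg : u ∉ σ '' (G.neighborSet u) := by
    rintro ⟨w, hw, hwu⟩
    rcases hNu_class w hw with ⟨i, rfl⟩ | hRw
    · rw [hσrange] at hwu
      exact hunr ⟨i + 1, hwu⟩
    · rw [hσid _ (hR.2.1 hRw)] at hwu
      subst hwu
      exact G.irrefl hw
  have hcardS : S.ncard = (G.neighborSet u).ncard + 1 := by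
    rw [hS, Set.ncard_insert_of_notMem hunotimg (Set.toFinite _),
      Set.ncard_image_of_injOn hinj]
  have hdisj : Disjoint (G.neighborSet y) S := by
    rw [Set.disjoint_right]
    rintro x hxS hxN
    rcases hxS with h | ⟨w, hw, rfl⟩
    · exact hNoRy u hu (h ▸ hxN)
    rcases hNu_class w hw with ⟨i, rfl⟩ | hRw
    · rw [hσrange] at hxN
      -- Adj y (f (i+1)), Adj u (f i)
      set t : ℕ := (i - c).val with htdef
      have hti : i = c + (t : ZMod m) := by
        rw [htdef, ZMod.natCast_zmod_val, add_sub_cancel]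
      have htlt : t < m := ZMod.val_lt _
      rcases Nat.eq_zero_or_pos t with ht0 | htpos
      · rw [ht0] at hti
        simp only [Nat.cast_zero, add_zero] at hti
        rw [hti] at hxN
        exact G.irrefl hxN
      rcases Nat.lt_or_ge t (m - 1) with htlt2 | htge
      · refine K3 hC hunr hadjc (t := t) htpos (by omega) ?_ ?_
        · rw [← hti]; exact hw
        · rw [← hti]; exact hxN
      · have ht : t = m - 1 := by omega
        have hic : i = c - 1 := by
          rw [hti, ht, castm1 (show 1 ≤ m by omega)]; ring
        refine K1 hC hunr (c := c - 1) ?_ ?_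
        · rw [← hic]; exact hw
        · rw [sub_add_cancel]; exact hadjc.symm
    · rw [hσid _ (hR.2.1 hRw)] at hxN
      exact hNoRy w hRw hxN
  have hle : (G.neighborSet y ∪ S).ncard ≤ Fintype.card V := by
    rw [← Nat.card_eq_fintype_card, ← Set.ncard_univ]
    exact Set.ncard_le_ncard (Set.subset_univ _) (Set.toFinite _)
  rw [Set.ncard_union_eq hdisj (Set.toFinite _) (Set.toFinite _), hcardS] at hle
  omega


section Pctx

variable {R : Set V} (hR : IsCompOf G (Set.range f)ᶜ R) {a b : ZMod m}
  (p : G.Walk (f a) (f b)) (hp : p.IsPath) (hlen : 2 ≤ p.length)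
  (hint : ∀ x ∈ p.support, x ≠ f a → x ≠ f b → x ∈ R)
include hR hp hlen hint

/-- the master gluing lemma : a good completion of `P` into a closed walk. -/
lemma glue (rest : List V) (hrne : rest ≠ [])
    (hgood : ∀ x ∈ rest, x ∉ R ∧ x ≠ f a ∧ x ≠ f b)
    (hrnd : rest.Nodup) (hrch : rest.Chain' G.Adj)
    (hjun : G.Adj (f b) (rest.head hrne))
    (hcls : G.Adj (rest.getLast hrne) (f a)) :
    rest.length + 3 ≤ m := by
  obtain ⟨hm3, hfi, hadj⟩ := basicfacts hC
  have hPne : p.support ≠ [] := p.support_ne_nil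
  set l : List V := p.support ++ rest with hl
  have hne : l ≠ [] := by
    rw [hl]; intro h; exact hPne (List.append_eq_nil_iff.mp h).1
  have hnd : l.Nodup := by
    rw [hl, List.nodup_append]
    refine ⟨hp.support_nodup, hrnd, ?_⟩
    intro x hx _y hx2 hxy; rw [← hxy] at hx2
    obtain ⟨hxR, hxa, hxb⟩ := hgood x hx2
    by_cases h1 : x = f a
    · exact hxa h1
    by_cases h2 : x = f b
    · exact hxb h2
    exact hxR (hint x hx h1 h2)
  have hch : l.Chain' G.Adj := by
    rw [hl]
    refine List.IsChain.append p.isChain_adj_support hrch ?_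
    intro x hx y hy
    rw [List.getLast?_eq_getLast_of_ne_nil hPne, p.getLast_support] at hx
    rw [List.head?_eq_head hrne] at hy
    cases hx; cases hy
    exact hjun
  have hcl : G.Adj (l.getLast hne) (l.head hne) := by
    have h1' : l.getLast hne = rest.getLast hrne := by
      apply lastVal
      rw [hl, List.getLast?_append_of_ne_nil _ hrne,
        List.getLast?_eq_getLast_of_ne_nil hrne]
    have h2' : l.head hne = f a := by
      apply headVal
      rw [hl, List.head?_append_of_ne_nil _ hPne, List.head?_eq_head hPne,
        p.head_support]
    rw [h1', h2']
    exact hcls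
  have hle := le_of_cycleList hC l (by
      rw [hl, List.length_append, p.length_support]; omega) hnd hch hne hcl
  rw [hl, List.length_append, p.length_support] at hle
  omega

omit hp hlen hint in
/-- goodness of interior cycle vertices. -/
lemma goodF {s : ℕ} (hb : b = a + (s : ZMod m)) (hsm : s ≤ m - 1) {j : ℕ}
    (hj1 : 1 ≤ j) (hj2 : j ≤ m - 1) (hjs : j ≠ s) :
    f (a + (j : ZMod m)) ∉ R ∧ f (a + (j : ZMod m)) ≠ f a ∧ f (a + (j : ZMod m)) ≠ f b := by
  obtain ⟨hm3, hfi, hadj⟩ := basicfacts hC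
  refine ⟨fun h => hR.2.1 h ⟨_, rfl⟩, ?_, ?_⟩
  · intro h
    have e1 : a + ((0:ℕ):ZMod m) = a := by norm_num
    exact findex_ne hfi (show 0 < j by omega) (by omega) (by rw [e1, h])
  · rw [hb]
    intro h
    rcases Nat.lt_or_ge j s with hlt | hge
    · exact findex_ne hfi hlt (by omega) h
    · exact findex_ne hfi (show s < j by omega) (by omega) h.symm

lemma K4 (hba : b = a + 1) : False := by
  obtain ⟨hm3, hfi, hadj⟩ := basicfacts hC
  have hb : b = a + ((1:ℕ) : ZMod m) := by rwa [Nat.cast_one]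
  have hrne : arcU f (b+1) (m-2) ≠ [] := arcU_ne_nil (by omega)
  have memA : ∀ x ∈ arcU f (b+1) (m-2), ∃ j, 2 ≤ j ∧ j ≤ m - 1 ∧ x = f (a + (j:ZMod m)) := by
    intro x hx
    obtain ⟨r, hr, he⟩ := mem_arcU.mp hx
    refine ⟨2 + r, by omega, by omega, ?_⟩
    rw [he, hb]; push_cast; ring
  have hle := glue hC hR p hp hlen hint (arcU f (b+1) (m-2)) hrne ?_ ?_ ?_ ?_ ?_
  · rw [length_arcU] at hle; omega
  · intro x hx
    obtain ⟨j, hj1, hj2, he⟩ := memA x hx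
    rw [he]
    exact goodF hC hR hb (by omega) (by omega) hj2 (by omega)
  · exact nodup_arcU hfi (by omega)
  · exact chain'_arcU hadj _ _
  · rw [head_arcU (by omega)]
    exact hadj b
  · rw [getLast_arcU (by omega)]
    have he : b + 1 + ((m - 2 - 1 : ℕ) : ZMod m) = a - 1 := by
      rw [show m - 2 - 1 = m - 3 by omega, Nat.cast_sub (show 3 ≤ m by omega), hb,
        ZMod.natCast_self]
      push_cast; ring
    rw [he]
    have := hadj (a - 1)
    rwa [sub_add_cancel] at this

variable {s : ℕ} (hs2 : 2 ≤ s) (hsm : s ≤ m - 2) (hb : b = a + (s : ZMod m))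
include hs2 hsm hb

omit hp hlen hint in
lemma memD1 : ∀ x ∈ arcD f (b-1) (s-1),
    ∃ j, 1 ≤ j ∧ j ≤ s - 1 ∧ x = f (a + (j:ZMod m)) := by
  intro x hx
  obtain ⟨r, hr, he⟩ := mem_arcD.mp hx
  refine ⟨s - 1 - r, by omega, by omega, ?_⟩
  rw [he, hb, Nat.cast_sub (by omega : r ≤ s - 1), Nat.cast_sub (by omega : 1 ≤ s)]
  push_cast; ring

omit hp hlen hint in
lemma memU2 : ∀ x ∈ arcU f (b+1) (m-s-1),
    ∃ j, s + 1 ≤ j ∧ j ≤ m - 1 ∧ x = f (a + (j:ZMod m)) := by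
  intro x hx
  obtain ⟨r, hr, he⟩ := mem_arcU.mp hx
  refine ⟨s + 1 + r, by omega, by omega, ?_⟩
  rw [he, hb]; push_cast; ring

omit hp hlen hint in
lemma headD1 : ∀ (h : arcD f (b-1) (s-1) ≠ []),
    G.Adj (f b) ((arcD f (b-1) (s-1)).head h) := by
  obtain ⟨hm3, hfi, hadj⟩ := basicfacts hC
  intro h
  rw [head_arcD (by omega)]
  have := (hadj (b-1)).symm
  rwa [sub_add_cancel] at this

omit hp hlen hint in
lemma lastD1 : ∀ (h : arcD f (b-1) (s-1) ≠ []),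
    (arcD f (b-1) (s-1)).getLast h = f (a + 1) := by
  obtain ⟨hm3, hfi, hadj⟩ := basicfacts hC
  intro h
  rw [getLast_arcD (by omega)]
  congr 1
  rw [hb, show s - 1 - 1 = s - 2 by omega, Nat.cast_sub (by omega : 2 ≤ s)]
  push_cast; ring

omit hp hlen hint in
lemma lastU2 : ∀ (h : arcU f (b+1) (m-s-1) ≠ []),
    (arcU f (b+1) (m-s-1)).getLast h = f (a - 1) := by
  obtain ⟨hm3, hfi, hadj⟩ := basicfacts hC
  intro h
  rw [getLast_arcU (by omega)]
  congr 1
  rw [hb, show m - s - 1 - 1 = m - (s + 2) by omega,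
    Nat.cast_sub (by omega : s + 2 ≤ m), ZMod.natCast_self]
  push_cast; ring

omit hp hlen hint in
lemma closeA : G.Adj (f (a - 1)) (f a) := by
  obtain ⟨hm3, hfi, hadj⟩ := basicfacts hC
  have := hadj (a - 1)
  rwa [sub_add_cancel] at this

/-- K8 : `v_i⁺` and `v_j⁺` are not adjacent. -/
lemma K8 (h12 : G.Adj (f (a+1)) (f (b+1))) : False := by
  obtain ⟨hm3, hfi, hadj⟩ := basicfacts hC
  have hD := memD1 hC hR hs2 hsm hb
  have hU := memU2 hC hR hs2 hsm hb
  have hDne : arcD f (b-1) (s-1) ≠ [] := arcD_ne_nil (by omega)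
  have hUne : arcU f (b+1) (m-s-1) ≠ [] := arcU_ne_nil (by omega)
  set rest : List V := arcD f (b-1) (s-1) ++ arcU f (b+1) (m-s-1) with hrest
  have hrne : rest ≠ [] := by
    rw [hrest]; intro h; exact hDne (List.append_eq_nil_iff.mp h).1
  have hle := glue hC hR p hp hlen hint rest hrne ?_ ?_ ?_ ?_ ?_
  · rw [hrest, List.length_append, length_arcD, length_arcU] at hle; omega
  · intro x hx
    rcases List.mem_append.mp hx with h | h
    · obtain ⟨j, hj1, hj2, he⟩ := hD x h
      rw [he]; exact goodF hC hR hb (by omega) (by omega) (by omega) (by omega)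
    · obtain ⟨j, hj1, hj2, he⟩ := hU x h
      rw [he]; exact goodF hC hR hb (by omega) (by omega) (by omega) (by omega)
  · rw [hrest, List.nodup_append]
    refine ⟨nodup_arcD hfi (by omega), nodup_arcU hfi (by omega), ?_⟩
    intro x hx _y hx2 hxy; rw [← hxy] at hx2
    obtain ⟨j, hj1, hj2, he⟩ := hD x hx
    obtain ⟨j', hj1', hj2', he'⟩ := hU x hx2
    rw [he] at he'
    exact findex_ne hfi (show j < j' by omega) (by omega) he'
  · rw [hrest]
    refine List.IsChain.append (chain'_arcD hadj _ _) (chain'_arcU hadj _ _) ?_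
    intro x hx y hy
    rw [List.getLast?_eq_getLast_of_ne_nil hDne,
      lastD1 hC hR hs2 hsm hb hDne] at hx
    rw [head?_arcU (by omega)] at hy
    cases hx; cases hy
    exact h12
  · have : rest.head hrne = (arcD f (b-1) (s-1)).head hDne := by
      apply headVal
      rw [hrest, List.head?_append_of_ne_nil _ hDne, List.head?_eq_head hDne]
    rw [this]
    exact headD1 hC hR hs2 hsm hb hDne
  · have : rest.getLast hrne = (arcU f (b+1) (m-s-1)).getLast hUne := by
      apply lastVal
      rw [hrest, List.getLast?_append_of_ne_nil _ hUne,
        List.getLast?_eq_getLast_of_ne_nil hUne]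
    rw [this, lastU2 hC hR hs2 hsm hb hUne]
    exact closeA hC hR hs2 hsm hb

/-- K7 : no common neighbour of `v_i⁺` and `v_j⁺` off the cycle and off `R`. -/
lemma K7 {z : V} (hz1 : z ∉ Set.range f) (hz2 : z ∉ R)
    (ha1 : G.Adj (f (a+1)) z) (hb1 : G.Adj z (f (b+1))) : False := by
  obtain ⟨hm3, hfi, hadj⟩ := basicfacts hC
  have hD := memD1 hC hR hs2 hsm hb
  have hU := memU2 hC hR hs2 hsm hb
  have hDne : arcD f (b-1) (s-1) ≠ [] := arcD_ne_nil (by omega)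
  have hUne : arcU f (b+1) (m-s-1) ≠ [] := arcU_ne_nil (by omega)
  have hZUne : z :: arcU f (b+1) (m-s-1) ≠ [] := List.cons_ne_nil _ _
  set rest : List V := arcD f (b-1) (s-1) ++ (z :: arcU f (b+1) (m-s-1)) with hrest
  have hrne : rest ≠ [] := by
    rw [hrest]; intro h; exact hDne (List.append_eq_nil_iff.mp h).1
  have hle := glue hC hR p hp hlen hint rest hrne ?_ ?_ ?_ ?_ ?_
  · rw [hrest, List.length_append, length_arcD, List.length_cons, length_arcU] at hle
    omega
  · intro x hx
    rcases List.mem_append.mp hx with h | h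
    · obtain ⟨j, hj1, hj2, he⟩ := hD x h
      rw [he]; exact goodF hC hR hb (by omega) (by omega) (by omega) (by omega)
    rcases List.mem_cons.mp h with h | h
    · subst h
      refine ⟨hz2, fun h => hz1 ⟨a, h.symm⟩, fun h => hz1 ⟨b, h.symm⟩⟩
    · obtain ⟨j, hj1, hj2, he⟩ := hU x h
      rw [he]; exact goodF hC hR hb (by omega) (by omega) (by omega) (by omega)
  · rw [hrest, List.nodup_append, List.nodup_cons]
    refine ⟨nodup_arcD hfi (by omega), ⟨?_, nodup_arcU hfi (by omega)⟩, ?_⟩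
    · intro h
      obtain ⟨j, hj1, hj2, he⟩ := hU z h
      exact hz1 ⟨_, he.symm⟩
    · intro x hx _y hx2 hxy; rw [← hxy] at hx2
      obtain ⟨j, hj1, hj2, he⟩ := hD x hx
      rcases List.mem_cons.mp hx2 with h | h
      · rw [he] at h; exact hz1 ⟨_, h⟩
      · obtain ⟨j', hj1', hj2', he'⟩ := hU x h
        rw [he] at he'
        exact findex_ne hfi (show j < j' by omega) (by omega) he'
  · rw [hrest]
    refine List.IsChain.append (chain'_arcD hadj _ _) ?_ ?_
    · refine List.IsChain.cons (chain'_arcU hadj _ _) ?_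
      intro y hy
      rw [head?_arcU (by omega)] at hy
      cases hy
      exact hb1
    · intro x hx y hy
      rw [List.getLast?_eq_getLast_of_ne_nil hDne,
        lastD1 hC hR hs2 hsm hb hDne] at hx
      rw [List.head?_cons] at hy
      cases hx; cases hy
      exact ha1
  · have : rest.head hrne = (arcD f (b-1) (s-1)).head hDne := by
      apply headVal
      rw [hrest, List.head?_append_of_ne_nil _ hDne, List.head?_eq_head hDne]
    rw [this]
    exact headD1 hC hR hs2 hsm hb hDne
  · have h1 : rest.getLast hrne = (arcU f (b+1) (m-s-1)).getLast hUne := by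
      apply lastVal
      rw [hrest, List.getLast?_append_of_ne_nil _ hZUne]
      show (([z] ++ arcU f (b+1) (m-s-1))).getLast? = _
      rw [List.getLast?_append_of_ne_nil _ hUne,
        List.getLast?_eq_getLast_of_ne_nil hUne]
    rw [h1, lastU2 hC hR hs2 hsm hb hUne]
    exact closeA hC hR hs2 hsm hb


/-- K5 : crossing claim 1. -/
lemma K5 {t : ℕ} (ht1 : 1 ≤ t) (ht2 : t ≤ m - s - 1)
    (h1 : G.Adj (f (b + (t:ℕ))) (f (a+1)))
    (h2 : G.Adj (f (b + (t:ℕ) + 1)) (f (b+1))) : False := by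
  obtain ⟨hm3, hfi, hadj⟩ := basicfacts hC
  have hD := memD1 hC hR hs2 hsm hb
  have hDne : arcD f (b-1) (s-1) ≠ [] := arcD_ne_nil (by omega)
  have hD2ne : arcD f (b + (t:ℕ)) t ≠ [] := arcD_ne_nil (by omega)
  have memD2 : ∀ x ∈ arcD f (b + (t:ℕ)) t,
      ∃ j, s + 1 ≤ j ∧ j ≤ s + t ∧ x = f (a + (j:ZMod m)) := by
    intro x hx
    obtain ⟨r, hr, he⟩ := mem_arcD.mp hx
    refine ⟨s + t - r, by omega, by omega, ?_⟩
    rw [he, hb, Nat.cast_sub (by omega : r ≤ s + t)]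
    push_cast; ring
  have memU3 : ∀ x ∈ arcU f (b + (t:ℕ) + 1) (m - s - 1 - t),
      ∃ j, s + t + 1 ≤ j ∧ j ≤ m - 1 ∧ x = f (a + (j:ZMod m)) := by
    intro x hx
    obtain ⟨r, hr, he⟩ := mem_arcU.mp hx
    refine ⟨s + t + 1 + r, by omega, by omega, ?_⟩
    rw [he, hb]; push_cast; ring
  have lastD2 : (arcD f (b + (t:ℕ)) t).getLast hD2ne = f (b + 1) := by
    rw [getLast_arcD (by omega)]
    congr 1
    rw [Nat.cast_sub (by omega : 1 ≤ t)]
    push_cast; ring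
  set rest : List V := arcD f (b-1) (s-1) ++
      (arcD f (b + (t:ℕ)) t ++ arcU f (b + (t:ℕ) + 1) (m - s - 1 - t)) with hrest
  have hrne : rest ≠ [] := by
    rw [hrest]; intro h; exact hDne (List.append_eq_nil_iff.mp h).1
  have hle := glue hC hR p hp hlen hint rest hrne ?_ ?_ ?_ ?_ ?_
  · rw [hrest, List.length_append, List.length_append, length_arcD, length_arcD,
      length_arcU] at hle
    omega
  · intro x hx
    rcases List.mem_append.mp hx with h | h
    · obtain ⟨j, hj1, hj2, he⟩ := hD x h
      rw [he]; exact goodF hC hR hb (by omega) (by omega) (by omega) (by omega)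
    rcases List.mem_append.mp h with h | h
    · obtain ⟨j, hj1, hj2, he⟩ := memD2 x h
      rw [he]; exact goodF hC hR hb (by omega) (by omega) (by omega) (by omega)
    · obtain ⟨j, hj1, hj2, he⟩ := memU3 x h
      rw [he]; exact goodF hC hR hb (by omega) (by omega) (by omega) (by omega)
  · rw [hrest, List.nodup_append, List.nodup_append]
    refine ⟨nodup_arcD hfi (by omega),
      ⟨nodup_arcD hfi (by omega), nodup_arcU hfi (by omega), ?_⟩, ?_⟩
    · intro x hx _y hx2 hxy; rw [← hxy] at hx2
      obtain ⟨j, hj1, hj2, he⟩ := memD2 x hx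
      obtain ⟨j', hj1', hj2', he'⟩ := memU3 x hx2
      rw [he] at he'
      exact findex_ne hfi (show j < j' by omega) (by omega) he'
    · intro x hx _y hx2 hxy; rw [← hxy] at hx2
      obtain ⟨j, hj1, hj2, he⟩ := hD x hx
      rcases List.mem_append.mp hx2 with h | h
      · obtain ⟨j', hj1', hj2', he'⟩ := memD2 x h
        rw [he] at he'
        exact findex_ne hfi (show j < j' by omega) (by omega) he'
      · obtain ⟨j', hj1', hj2', he'⟩ := memU3 x h
        rw [he] at he'
        exact findex_ne hfi (show j < j' by omega) (by omega) he'
  · rw [hrest]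
    refine List.IsChain.append (chain'_arcD hadj _ _) ?_ ?_
    · refine List.IsChain.append (chain'_arcD hadj _ _) (chain'_arcU hadj _ _) ?_
      intro x hx y hy
      rcases Nat.eq_zero_or_pos (m - s - 1 - t) with h0 | hpos
      · rw [show arcU f (b + (t:ℕ) + 1) (m - s - 1 - t) = [] by rw [h0]; rfl] at hy
        simp at hy
      rw [List.getLast?_eq_getLast_of_ne_nil hD2ne, lastD2] at hx
      rw [head?_arcU (by omega : m - s - 1 - t ≠ 0)] at hy
      cases hx; cases hy
      exact h2.symm
    · intro x hx y hy
      rw [List.getLast?_eq_getLast_of_ne_nil hDne,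
        lastD1 hC hR hs2 hsm hb hDne] at hx
      rw [List.head?_append_of_ne_nil _ hD2ne, head?_arcD (by omega)] at hy
      cases hx; cases hy
      exact h1.symm
  · have : rest.head hrne = (arcD f (b-1) (s-1)).head hDne := by
      apply headVal
      rw [hrest, List.head?_append_of_ne_nil _ hDne, List.head?_eq_head hDne]
    rw [this]
    exact headD1 hC hR hs2 hsm hb hDne
  · rcases Nat.lt_or_ge t (m - s - 1) with hts | hts
    · have hUne : arcU f (b + (t:ℕ) + 1) (m - s - 1 - t) ≠ [] := arcU_ne_nil (by omega)
      have h1' : rest.getLast hrne = (arcU f (b + (t:ℕ) + 1) (m - s - 1 - t)).getLast hUne := by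
        apply lastVal
        rw [hrest, List.getLast?_append_of_ne_nil _ (by
            intro h; exact hUne (List.append_eq_nil_iff.mp h).2),
          List.getLast?_append_of_ne_nil _ hUne,
          List.getLast?_eq_getLast_of_ne_nil hUne]
      rw [h1', getLast_arcU (by omega)]
      have he : b + (t:ℕ) + 1 + ((m - s - 1 - t - 1 : ℕ) : ZMod m) = a - 1 := by
        rw [hb, show m - s - 1 - t - 1 = m - (s + t + 2) by omega,
          Nat.cast_sub (by omega : s + t + 2 ≤ m), ZMod.natCast_self]
        push_cast; ring
      rw [he]
      exact closeA hC hR hs2 hsm hb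
    · have htv : t = m - s - 1 := by omega
      have hUnil : arcU f (b + (t:ℕ) + 1) (m - s - 1 - t) = [] := by
        have : m - s - 1 - t = 0 := by omega
        rw [this]; rfl
      have h1' : rest.getLast hrne = f (b + 1) := by
        apply lastVal
        rw [hrest, hUnil, List.append_nil,
          List.getLast?_append_of_ne_nil _ hD2ne,
          List.getLast?_eq_getLast_of_ne_nil hD2ne, lastD2]
      rw [h1']
      -- here h2 : Adj (f (b+t+1)) (f (b+1)) with b+t+1 = a
      have he : b + (t:ℕ) + 1 = a := by
        rw [hb, htv, show m - s - 1 = m - (s + 1) by omega,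
          Nat.cast_sub (by omega : s + 1 ≤ m), ZMod.natCast_self]
        push_cast; ring
      rw [he] at h2
      exact h2.symm

/-- K6 : crossing claim 2. -/
lemma K6 {t : ℕ} (ht1 : 1 ≤ t) (ht2 : t ≤ s - 1)
    (h1 : G.Adj (f (a + (t:ℕ))) (f (b+1)))
    (h2 : G.Adj (f (a + (t:ℕ) + 1)) (f (a+1))) : False := by
  obtain ⟨hm3, hfi, hadj⟩ := basicfacts hC
  have hU := memU2 hC hR hs2 hsm hb
  have hU1ne : arcU f (a+1) t ≠ [] := arcU_ne_nil (by omega)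
  have hUne : arcU f (b+1) (m-s-1) ≠ [] := arcU_ne_nil (by omega)
  have memD3 : ∀ x ∈ arcD f (b-1) (s-1-t),
      ∃ j, t + 1 ≤ j ∧ j ≤ s - 1 ∧ x = f (a + (j:ZMod m)) := by
    intro x hx
    obtain ⟨r, hr, he⟩ := mem_arcD.mp hx
    refine ⟨s - 1 - r, by omega, by omega, ?_⟩
    rw [he, hb, Nat.cast_sub (by omega : r ≤ s - 1), Nat.cast_sub (by omega : 1 ≤ s)]
    push_cast; ring
  have memU1 : ∀ x ∈ arcU f (a+1) t,
      ∃ j, 1 ≤ j ∧ j ≤ t ∧ x = f (a + (j:ZMod m)) := by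
    intro x hx
    obtain ⟨r, hr, he⟩ := mem_arcU.mp hx
    refine ⟨1 + r, by omega, by omega, ?_⟩
    rw [he]; push_cast; ring
  have lastU1 : (arcU f (a+1) t).getLast hU1ne = f (a + (t:ℕ)) := by
    rw [getLast_arcU (by omega)]
    congr 1
    rw [Nat.cast_sub (by omega : 1 ≤ t)]
    push_cast; ring
  set rest : List V := arcD f (b-1) (s-1-t) ++
      (arcU f (a+1) t ++ arcU f (b+1) (m-s-1)) with hrest
  have hrne : rest ≠ [] := by
    rw [hrest]; intro h
    exact hU1ne (List.append_eq_nil_iff.mp (List.append_eq_nil_iff.mp h).2).1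
  have hle := glue hC hR p hp hlen hint rest hrne ?_ ?_ ?_ ?_ ?_
  · rw [hrest, List.length_append, List.length_append, length_arcD, length_arcU,
      length_arcU] at hle
    omega
  · intro x hx
    rcases List.mem_append.mp hx with h | h
    · obtain ⟨j, hj1, hj2, he⟩ := memD3 x h
      rw [he]; exact goodF hC hR hb (by omega) (by omega) (by omega) (by omega)
    rcases List.mem_append.mp h with h | h
    · obtain ⟨j, hj1, hj2, he⟩ := memU1 x h
      rw [he]; exact goodF hC hR hb (by omega) (by omega) (by omega) (by omega)
    · obtain ⟨j, hj1, hj2, he⟩ := hU x h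
      rw [he]; exact goodF hC hR hb (by omega) (by omega) (by omega) (by omega)
  · rw [hrest, List.nodup_append, List.nodup_append]
    refine ⟨nodup_arcD hfi (by omega),
      ⟨nodup_arcU hfi (by omega), nodup_arcU hfi (by omega), ?_⟩, ?_⟩
    · intro x hx _y hx2 hxy; rw [← hxy] at hx2
      obtain ⟨j, hj1, hj2, he⟩ := memU1 x hx
      obtain ⟨j', hj1', hj2', he'⟩ := hU x hx2
      rw [he] at he'
      exact findex_ne hfi (show j < j' by omega) (by omega) he'
    · intro x hx _y hx2 hxy; rw [← hxy] at hx2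
      obtain ⟨j, hj1, hj2, he⟩ := memD3 x hx
      rcases List.mem_append.mp hx2 with h | h
      · obtain ⟨j', hj1', hj2', he'⟩ := memU1 x h
        rw [he] at he'
        exact (findex_ne hfi (show j' < j by omega) (by omega) he'.symm).elim
      · obtain ⟨j', hj1', hj2', he'⟩ := hU x h
        rw [he] at he'
        exact findex_ne hfi (show j < j' by omega) (by omega) he'
  · rw [hrest]
    refine List.IsChain.append (chain'_arcD hadj _ _) ?_ ?_
    · refine List.IsChain.append (chain'_arcU hadj _ _) (chain'_arcU hadj _ _) ?_
      intro x hx y hy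
      rw [List.getLast?_eq_getLast_of_ne_nil hU1ne, lastU1] at hx
      rw [head?_arcU (by omega : m - s - 1 ≠ 0)] at hy
      cases hx; cases hy
      exact h1
    · intro x hx y hy
      rcases Nat.eq_zero_or_pos (s - 1 - t) with h0 | hpos
      · rw [show arcD f (b-1) (s-1-t) = [] by rw [h0]; rfl] at hx
        simp at hx
      · have hD3ne : arcD f (b-1) (s-1-t) ≠ [] := arcD_ne_nil (by omega)
        rw [List.getLast?_eq_getLast_of_ne_nil hD3ne, getLast_arcD (by omega)] at hx
        rw [List.head?_append_of_ne_nil _ hU1ne, head?_arcU (by omega)] at hy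
        cases hx; cases hy
        have he : b - 1 - ((s - 1 - t - 1 : ℕ) : ZMod m) = a + (t:ℕ) + 1 := by
          rw [hb, show s - 1 - t - 1 = s - (t + 2) by omega,
            Nat.cast_sub (by omega : t + 2 ≤ s)]
          push_cast; ring
        rw [he]
        exact h2
  · rcases Nat.eq_zero_or_pos (s - 1 - t) with h0 | hpos
    · have hDnil : arcD f (b-1) (s-1-t) = [] := by rw [h0]; rfl
      have h1' : rest.head hrne = f (a+1) := by
        apply headVal
        rw [hrest, hDnil, List.nil_append,
          List.head?_append_of_ne_nil _ hU1ne, head?_arcU (by omega)]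
      rw [h1']
      have he : a + (t:ℕ) + 1 = b := by
        rw [hb, show s = t + 1 by omega]; push_cast; ring
      rw [← he]
      exact h2
    · have hD3ne : arcD f (b-1) (s-1-t) ≠ [] := arcD_ne_nil (by omega)
      have h1' : rest.head hrne = f (b - 1) := by
        apply headVal
        rw [hrest, List.head?_append_of_ne_nil _ hD3ne, head?_arcD (by omega)]
      rw [h1']
      have := (hadj (b-1)).symm
      rwa [sub_add_cancel] at this
  · have h1' : rest.getLast hrne = (arcU f (b+1) (m-s-1)).getLast hUne := by
      apply lastVal
      rw [hrest, List.getLast?_append_of_ne_nil _ (by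
          intro h; exact hUne (List.append_eq_nil_iff.mp h).2),
        List.getLast?_append_of_ne_nil _ hUne,
        List.getLast?_eq_getLast_of_ne_nil hUne]
    rw [h1', lastU2 hC hR hs2 hsm hb hUne]
    exact closeA hC hR hs2 hsm hb


/-- Count B : `d(v_i⁺) + d(v_j⁺) < n`. -/
lemma CntB [Fintype V] {u u' : V} (hu : u ∈ R) (hu' : u' ∈ R)
    (hadja : G.Adj (f a) u) (hadjb : G.Adj (f b) u') :
    (G.neighborSet (f (a+1))).ncard + (G.neighborSet (f (b+1))).ncard + 1
      ≤ Fintype.card V := by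
  obtain ⟨hm3, hfi, hadj⟩ := basicfacts hC
  haveI : NeZero m := ⟨by omega⟩
  classical
  set y1 := f (a+1) with hy1
  set y2 := f (b+1) with hy2
  have hNoR1 : ∀ r ∈ R, ¬ G.Adj y1 r := fun r hr h => K2 hC hR hu hadja hr h.symm
  have hNoR2 : ∀ r ∈ R, ¬ G.Adj y2 r := fun r hr h => K2 hC hR hu' hadjb hr h.symm
  have h12 : ¬ G.Adj y1 y2 := fun h => K8 hC hR p hp hlen hint hs2 hsm hb h
  have hcastinj : ∀ t1 t2 : ℕ, t1 < m → t2 < m → (t1 : ZMod m) = t2 → t1 = t2 := by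
    intro t1 t2 h1 h2 h
    rw [← ZMod.val_cast_of_lt h1, ← ZMod.val_cast_of_lt h2, h]
  set A1 : Finset (ZMod m) := Finset.univ.filter (fun e => G.Adj y1 (f e)) with hA1
  set A2 : Finset (ZMod m) := Finset.univ.filter (fun e => G.Adj y2 (f e)) with hA2
  set S1 : Finset (ZMod m) := (Finset.range s).image (fun t : ℕ => a + 1 + (t : ZMod m))
    with hS1
  set S2 : Finset (ZMod m) := (Finset.range (m-s)).image (fun t : ℕ => b + 1 + (t : ZMod m))
    with hS2
  have hmemS1 : ∀ e, e ∈ S1 ↔ ∃ t, t < s ∧ e = a + 1 + (t : ZMod m) := by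
    intro e
    simp only [hS1, Finset.mem_image, Finset.mem_range]
    exact ⟨fun ⟨t, ht, he⟩ => ⟨t, ht, he.symm⟩, fun ⟨t, ht, he⟩ => ⟨t, ht, he.symm⟩⟩
  have hmemS2 : ∀ e, e ∈ S2 ↔ ∃ t, t < m - s ∧ e = b + 1 + (t : ZMod m) := by
    intro e
    simp only [hS2, Finset.mem_image, Finset.mem_range]
    exact ⟨fun ⟨t, ht, he⟩ => ⟨t, ht, he.symm⟩, fun ⟨t, ht, he⟩ => ⟨t, ht, he.symm⟩⟩
  have hS1card : S1.card = s := by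
    rw [hS1, Finset.card_image_of_injOn, Finset.card_range]
    intro t1 h1 t2 h2 he
    simp only [Finset.coe_range, Set.mem_Iio] at h1 h2
    exact hcastinj t1 t2 (by omega) (by omega) (by
      have := add_left_cancel he; exact this)
  have hS2card : S2.card = m - s := by
    rw [hS2, Finset.card_image_of_injOn, Finset.card_range]
    intro t1 h1 t2 h2 he
    simp only [Finset.coe_range, Set.mem_Iio] at h1 h2
    exact hcastinj t1 t2 (by omega) (by omega) (by
      have := add_left_cancel he; exact this)
  have hcover : ∀ e : ZMod m, e ∈ S1 ∪ S2 := by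
    intro e
    set t : ℕ := (e - (a+1)).val with ht
    have hte : e = a + 1 + (t : ZMod m) := by
      rw [ht, ZMod.natCast_zmod_val]; ring
    have htm : t < m := ZMod.val_lt _
    rcases Nat.lt_or_ge t s with h | h
    · exact Finset.mem_union_left _ ((hmemS1 e).mpr ⟨t, h, hte⟩)
    · refine Finset.mem_union_right _ ((hmemS2 e).mpr ⟨t - s, by omega, ?_⟩)
      rw [hte, hb, Nat.cast_sub h]
      push_cast; ring
  -- elementary index facts
  have ha1S1 : a + 1 ∉ A1 := by
    rw [hA1, Finset.mem_filter]
    rintro ⟨-, h⟩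
    exact G.irrefl h
  have hb1A2 : b + 1 ∉ A2 := by
    rw [hA2, Finset.mem_filter]
    rintro ⟨-, h⟩
    exact G.irrefl h
  have hb1A1 : b + 1 ∉ A1 := by
    rw [hA1, Finset.mem_filter]
    rintro ⟨-, h⟩
    exact h12 h
  have ha1A2 : a + 1 ∉ A2 := by
    rw [hA2, Finset.mem_filter]
    rintro ⟨-, h⟩
    exact h12 h.symm
  have hb1S1 : b + 1 ∉ S1 := by
    intro h
    obtain ⟨t, ht, he⟩ := (hmemS1 _).mp h
    rw [hb] at he
    have hee : a + ((t + 1 : ℕ) : ZMod m) = a + ((s + 1 : ℕ) : ZMod m) := by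
      push_cast
      rw [show a + ((t:ZMod m) + 1) = a + 1 + (t:ZMod m) by ring, ← he]
      ring
    exact natCast_ne_zmod (show t + 1 < s + 1 by omega) (by omega) (add_left_cancel hee)
  have ha1S2 : a + 1 ∉ S2 := by
    intro h
    obtain ⟨t, ht, he⟩ := (hmemS2 _).mp h
    rw [hb] at he
    have hee : a + ((1 : ℕ) : ZMod m) = a + ((s + t + 1 : ℕ) : ZMod m) := by
      push_cast; rw [show a + (1:ZMod m) = a + 1 by ring, he]; ring
    exact natCast_ne_zmod (show 1 < s + t + 1 by omega) (by omega) (add_left_cancel hee)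
  -- Goal 1 : on the arc S1
  have goal1 : (A1 ∩ S1).card + (A2 ∩ S1).card ≤ s := by
    set X := A1 ∩ S1 with hX
    set Y := (A2 ∩ S1).image (· + 1) with hY
    have hYcard : Y.card = (A2 ∩ S1).card :=
      Finset.card_image_of_injective _ (add_left_injective 1)
    set T := insert (b+1) (S1.erase (a+1)) with hT
    have hXT : X ⊆ T := by
      intro x hx
      rw [hX, Finset.mem_inter] at hx
      refine Finset.mem_insert_of_mem (Finset.mem_erase.mpr ⟨?_, hx.2⟩)
      intro h
      rw [h] at hx
      exact ha1S1 hx.1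
    have hYT : Y ⊆ T := by
      intro y hy
      rw [hY, Finset.mem_image] at hy
      obtain ⟨e, he, rfl⟩ := hy
      rw [Finset.mem_inter] at he
      obtain ⟨t, ht, hte⟩ := (hmemS1 _).mp he.2
      rcases Nat.lt_or_ge (t+1) s with h | h
      · refine Finset.mem_insert_of_mem (Finset.mem_erase.mpr ⟨?_, ?_⟩)
        · intro hcon
          rw [hte] at hcon
          have : a + ((t + 2 : ℕ) : ZMod m) = a + ((1:ℕ) : ZMod m) := by
            push_cast; linear_combination hcon
          have := hcastinj _ _ (by omega) (by omega) (add_left_cancel this)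
          omega
        · refine (hmemS1 _).mpr ⟨t+1, h, ?_⟩
          rw [hte]; push_cast; ring
      · have hts : t + 1 = s := by omega
        refine Finset.mem_insert.mpr (Or.inl ?_)
        rw [hte, hb, ← hts]; push_cast; ring
    have hXY : Disjoint X Y := by
      rw [Finset.disjoint_left]
      intro x hx hy
      rw [hY, Finset.mem_image] at hy
      obtain ⟨e, he, rfl⟩ := hy
      rw [Finset.mem_inter] at he hx
      obtain ⟨t, ht, hte⟩ := (hmemS1 _).mp he.2
      obtain ⟨t', ht', hte'⟩ := (hmemS1 _).mp hx.2
      -- e + 1 = a + 1 + (t+1), and e+1 ∈ S1 so t+1 = t' < s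
      have htt : t + 1 = t' := by
        have : a + ((t + 2 : ℕ) : ZMod m) = a + ((t' + 1 : ℕ) : ZMod m) := by
          push_cast; linear_combination hte' - hte
        have := hcastinj _ _ (by omega) (by omega) (add_left_cancel this)
        omega
      -- K6 with tK = t + 1
      refine K6 hC hR p hp hlen hint hs2 hsm hb (t := t + 1) (by omega) (by omega) ?_ ?_
      · have h1 : G.Adj y2 (f e) := (Finset.mem_filter.mp he.1).2
        have : f e = f (a + ((t+1 : ℕ) : ZMod m)) := by
          rw [hte]; congr 1; push_cast; ring
        rw [this] at h1
        exact h1.symm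
      · have h2 : G.Adj y1 (f (e + 1)) := (Finset.mem_filter.mp hx.1).2
        have : f (e + 1) = f (a + ((t+1 : ℕ) : ZMod m) + 1) := by
          rw [hte]; congr 1; push_cast; ring
        rw [this] at h2
        exact h2.symm
    have hTcard : T.card ≤ s := by
      calc T.card ≤ (S1.erase (a+1)).card + 1 := Finset.card_insert_le _ _
      _ ≤ s := by
          rw [Finset.card_erase_of_mem]
          · omega
          · exact (hmemS1 _).mpr ⟨0, by omega, by norm_num⟩
    calc X.card + (A2 ∩ S1).card = X.card + Y.card := by rw [hYcard]
    _ = (X ∪ Y).card := (Finset.card_union_of_disjoint hXY).symm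
    _ ≤ T.card := Finset.card_le_card (Finset.union_subset hXT hYT)
    _ ≤ s := hTcard
  -- Goal 2 : on the arc S2
  have goal2 : (A2 ∩ S2).card + (A1 ∩ S2).card ≤ m - s := by
    set X := A2 ∩ S2 with hX
    set Y := (A1 ∩ S2).image (· + 1) with hY
    have hYcard : Y.card = (A1 ∩ S2).card :=
      Finset.card_image_of_injective _ (add_left_injective 1)
    set T := insert (a+1) (S2.erase (b+1)) with hT
    have hXT : X ⊆ T := by
      intro x hx
      rw [hX, Finset.mem_inter] at hx
      refine Finset.mem_insert_of_mem (Finset.mem_erase.mpr ⟨?_, hx.2⟩)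
      intro h
      rw [h] at hx
      exact hb1A2 hx.1
    have hYT : Y ⊆ T := by
      intro y hy
      rw [hY, Finset.mem_image] at hy
      obtain ⟨e, he, rfl⟩ := hy
      rw [Finset.mem_inter] at he
      obtain ⟨t, ht, hte⟩ := (hmemS2 _).mp he.2
      rcases Nat.lt_or_ge (t+1) (m-s) with h | h
      · refine Finset.mem_insert_of_mem (Finset.mem_erase.mpr ⟨?_, ?_⟩)
        · intro hcon
          rw [hte] at hcon
          have : b + ((t + 2 : ℕ) : ZMod m) = b + ((1:ℕ) : ZMod m) := by
            push_cast; linear_combination hcon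
          have := hcastinj _ _ (by omega) (by omega) (add_left_cancel this)
          omega
        · refine (hmemS2 _).mpr ⟨t+1, h, ?_⟩
          rw [hte]; push_cast; ring
      · have hts : t + 1 = m - s := by omega
        refine Finset.mem_insert.mpr (Or.inl ?_)
        rw [hte, hb]
        have : ((t:ZMod m) + 1) = ((m - s : ℕ) : ZMod m) := by
          rw [← hts]; push_cast; ring
        rw [show a + (s:ZMod m) + 1 + (t:ZMod m) + 1
            = a + (s:ZMod m) + ((t:ZMod m) + 1) + 1 by ring, this,
          Nat.cast_sub (by omega : s ≤ m), ZMod.natCast_self]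
        ring
    have hXY : Disjoint X Y := by
      rw [Finset.disjoint_left]
      intro x hx hy
      rw [hY, Finset.mem_image] at hy
      obtain ⟨e, he, rfl⟩ := hy
      rw [Finset.mem_inter] at he hx
      obtain ⟨t, ht, hte⟩ := (hmemS2 _).mp he.2
      obtain ⟨t', ht', hte'⟩ := (hmemS2 _).mp hx.2
      have htt : t + 1 = t' := by
        have : b + ((t + 2 : ℕ) : ZMod m) = b + ((t' + 1 : ℕ) : ZMod m) := by
          push_cast; linear_combination hte' - hte
        have := hcastinj _ _ (by omega) (by omega) (add_left_cancel this)
        omega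
      refine K5 hC hR p hp hlen hint hs2 hsm hb (t := t + 1) (by omega) (by omega) ?_ ?_
      · have h1 : G.Adj y1 (f e) := (Finset.mem_filter.mp he.1).2
        have : f e = f (b + ((t+1 : ℕ) : ZMod m)) := by
          rw [hte]; congr 1; push_cast; ring
        rw [this] at h1
        exact h1.symm
      · have h2 : G.Adj y2 (f (e + 1)) := (Finset.mem_filter.mp hx.1).2
        have : f (e + 1) = f (b + ((t+1 : ℕ) : ZMod m) + 1) := by
          rw [hte]; congr 1; push_cast; ring
        rw [this] at h2
        exact h2.symm
    have hTcard : T.card ≤ m - s := by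
      calc T.card ≤ (S2.erase (b+1)).card + 1 := Finset.card_insert_le _ _
      _ ≤ m - s := by
          rw [Finset.card_erase_of_mem]
          · omega
          · exact (hmemS2 _).mpr ⟨0, by omega, by norm_num⟩
    calc X.card + (A1 ∩ S2).card = X.card + Y.card := by rw [hYcard]
    _ = (X ∪ Y).card := (Finset.card_union_of_disjoint hXY).symm
    _ ≤ T.card := Finset.card_le_card (Finset.union_subset hXT hYT)
    _ ≤ m - s := hTcard
  -- combine the on-cycle counts
  have honcycle : A1.card + A2.card ≤ m := by
    have hA1split : A1.card ≤ (A1 ∩ S1).card + (A1 ∩ S2).card := by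
      have he : A1 = (A1 ∩ S1) ∪ (A1 ∩ S2) := by
        rw [← Finset.inter_union_distrib_left,
          Finset.eq_univ_iff_forall.mpr hcover, Finset.inter_univ]
      conv_lhs => rw [he]
      exact Finset.card_union_le _ _
    have hA2split : A2.card ≤ (A2 ∩ S1).card + (A2 ∩ S2).card := by
      have he : A2 = (A2 ∩ S1) ∪ (A2 ∩ S2) := by
        rw [← Finset.inter_union_distrib_left,
          Finset.eq_univ_iff_forall.mpr hcover, Finset.inter_univ]
      conv_lhs => rw [he]
      exact Finset.card_union_le _ _
    omega
  -- off-cycle neighbourhoods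
  set N1 := G.neighborSet y1 with hN1
  set N2 := G.neighborSet y2 with hN2
  have hsplit1 : N1.ncard = (N1 ∩ Set.range f).ncard + (N1 \ Set.range f).ncard :=
    (Set.ncard_inter_add_ncard_diff_eq_ncard N1 (Set.range f) (Set.toFinite _)).symm
  have hsplit2 : N2.ncard = (N2 ∩ Set.range f).ncard + (N2 \ Set.range f).ncard :=
    (Set.ncard_inter_add_ncard_diff_eq_ncard N2 (Set.range f) (Set.toFinite _)).symm
  have hcyc1 : (N1 ∩ Set.range f).ncard = A1.card := by
    have himg : N1 ∩ Set.range f = f '' (A1 : Set (ZMod m)) := by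
      ext x
      simp only [Set.mem_inter_iff, Set.mem_image, Set.mem_range, hA1,
        Finset.coe_filter, Set.mem_setOf_eq, Finset.mem_univ, true_and]
      constructor
      · rintro ⟨hx, e, rfl⟩
        exact ⟨e, hx, rfl⟩
      · rintro ⟨e, he, rfl⟩
        exact ⟨he, e, rfl⟩
    rw [himg, Set.ncard_image_of_injective _ hfi, Set.ncard_coe_finset]
  have hcyc2 : (N2 ∩ Set.range f).ncard = A2.card := by
    have himg : N2 ∩ Set.range f = f '' (A2 : Set (ZMod m)) := by
      ext x
      simp only [Set.mem_inter_iff, Set.mem_image, Set.mem_range, hA2,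
        Finset.coe_filter, Set.mem_setOf_eq, Finset.mem_univ, true_and]
      constructor
      · rintro ⟨hx, e, rfl⟩
        exact ⟨e, hx, rfl⟩
      · rintro ⟨e, he, rfl⟩
        exact ⟨he, e, rfl⟩
    rw [himg, Set.ncard_image_of_injective _ hfi, Set.ncard_coe_finset]
  set O1 := N1 \ Set.range f with hO1
  set O2 := N2 \ Set.range f with hO2
  have hOdisj : Disjoint O1 O2 := by
    rw [Set.disjoint_left]
    rintro z ⟨hz1, hzr⟩ ⟨hz2, -⟩
    have hzR : z ∉ R := fun h => hNoR1 z h hz1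
    exact K7 hC hR p hp hlen hint hs2 hsm hb hzr hzR hz1 hz2.symm
  have hOsub : O1 ∪ O2 ⊆ (Set.range f ∪ R)ᶜ := by
    rintro z (⟨hz1, hzr⟩ | ⟨hz2, hzr⟩) <;> intro hcon
    · rcases hcon with h | h
      · exact hzr h
      · exact hNoR1 z h hz1
    · rcases hcon with h | h
      · exact hzr h
      · exact hNoR2 z h hz2
  have hcompl : (Set.range f ∪ R).ncard + ((Set.range f ∪ R)ᶜ).ncard = Fintype.card V := by
    rw [← Nat.card_eq_fintype_card]
    exact Set.ncard_add_ncard_compl _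
  have hrangecard : (Set.range f).ncard = m := by
    rw [← Set.image_univ, Set.ncard_image_of_injective _ hfi, Set.ncard_univ,
      Nat.card_eq_fintype_card, ZMod.card]
  have hRdisj : Disjoint (Set.range f) R := by
    rw [Set.disjoint_left]
    intro z hz hzR
    exact hR.2.1 hzR hz
  have hunioncard : (Set.range f ∪ R).ncard = m + R.ncard := by
    rw [Set.ncard_union_eq hRdisj (Set.toFinite _) (Set.toFinite _), hrangecard]
  have hRpos : 1 ≤ R.ncard := (Set.ncard_pos (Set.toFinite _)).mpr hR.1
  have hOcard : O1.ncard + O2.ncard ≤ Fintype.card V - m - R.ncard := by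
    have h1 : O1.ncard + O2.ncard = (O1 ∪ O2).ncard :=
      (Set.ncard_union_eq hOdisj (Set.toFinite _) (Set.toFinite _)).symm
    have h2 : (O1 ∪ O2).ncard ≤ ((Set.range f ∪ R)ᶜ).ncard :=
      Set.ncard_le_ncard hOsub (Set.toFinite _)
    omega
  have hmlen : m + R.ncard ≤ Fintype.card V := by omega
  rw [hsplit1, hsplit2, hcyc1, hcyc2]
  omega

end Pctx

omit hC [DecidableEq V] in
lemma path_start_ne {x y : V} (q : G.Walk x y) (hq : q.IsPath) (hl : 1 ≤ q.length) :
    x ≠ y := by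
  cases q with
  | nil => simp at hl
  | cons h' q' =>
    rintro rfl
    rw [SimpleGraph.Walk.cons_isPath_iff] at hq
    exact hq.2 q'.end_mem_support

lemma extractU {R : Set V} (hR : IsCompOf G (Set.range f)ᶜ R) {a b : ZMod m}
    (p : G.Walk (f a) (f b)) (hp : p.IsPath) (hlen : 2 ≤ p.length)
    (hint : ∀ x ∈ p.support, x ≠ f a → x ≠ f b → x ∈ R)
    (hfab : f a ≠ f b) :
    ∃ u, u ∈ R ∧ G.Adj (f a) u := by
  obtain ⟨w, hadjw, q, rfl⟩ := SimpleGraph.Walk.exists_eq_cons_of_ne hfab p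
  rw [SimpleGraph.Walk.cons_isPath_iff] at hp
  refine ⟨w, hint w (by simp [q.start_mem_support]) ?_ ?_, hadjw⟩
  · intro h
    subst h
    exact hp.2 q.start_mem_support
  · intro h
    have := path_start_ne q hp.1 (by
      simp only [SimpleGraph.Walk.length_cons] at hlen; omega)
    exact this h

lemma revC :
    IsLongestCycleMap G m (fun i => f (-i)) := by
  obtain ⟨⟨hm3, hfi, hadj⟩, hmax⟩ := hC
  refine ⟨⟨hm3, fun i j h => neg_injective (hfi h), fun i => ?_⟩, hmax⟩
  have := (hadj (-i - 1)).symm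
  rw [sub_add_cancel] at this
  have he : -(i + 1) = -i - 1 := by ring
  show G.Adj (f (-i)) (f (-(i+1)))
  rw [he]
  exact this

omit hC [DecidableEq V] in
lemma revRange : Set.range (fun i : ZMod m => f (-i)) = Set.range f := by
  ext x
  constructor
  · rintro ⟨i, rfl⟩; exact ⟨-i, rfl⟩
  · rintro ⟨i, rfl⟩; exact ⟨-i, by simp⟩

end Kcore


lemma sideG [Fintype V] (hC : IsLongestCycleMap G m f) {R : Set V}
    (hR : IsCompOf G (Set.range f)ᶜ R) {a b : ZMod m} (hab : a ≠ b)
    (p : G.Walk (f a) (f b)) (hp : p.IsPath) (hlen : 2 ≤ p.length)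
    (hint : ∀ x ∈ p.support, x ≠ f a → x ≠ f b → x ∈ R)
    (hch : ClawHeavy G) :
    f (a-1) ≠ f (a+1) ∧ (G.Adj (f (a-1)) (f (a+1)) ∨
      Fintype.card V ≤ (G.neighborSet (f (a-1))).ncard + (G.neighborSet (f (a+1))).ncard) := by
  obtain ⟨hm3, hfi, hadj⟩ := basicfacts hC
  have hfab : f a ≠ f b := fun h => hab (hfi h)
  obtain ⟨u, hu, hadjau⟩ := extractU hC hR p hp hlen hint hfab
  have hRg : IsCompOf G (Set.range (fun i : ZMod m => f (-i)))ᶜ R := by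
    rw [revRange (f := f)]
    exact hR
  have hne : f (a-1) ≠ f (a+1) := by
    have h0 := findex_ne (c := a - 1) hfi (show 0 < 2 by omega) (show 2 < m + 0 by omega)
    have e0 : (a-1) + ((0:ℕ):ZMod m) = a - 1 := by norm_num
    have e2 : (a-1) + ((2:ℕ):ZMod m) = a + 1 := by push_cast; ring
    rwa [e0, e2] at h0
  have hCntA1 := CntA hC hR hu hadjau
  have hCntA2 : (G.neighborSet u).ncard + (G.neighborSet (f (a-1))).ncard + 1
      ≤ Fintype.card V := by
    have h1 : G.Adj ((fun i : ZMod m => f (-i)) (-a)) u := by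
      show G.Adj (f (-(-a))) u
      rw [neg_neg]
      exact hadjau
    have h2 := CntA (revC hC) hRg hu h1
    rwa [show (-(-a + 1) : ZMod m) = a - 1 by ring] at h2
  by_cases hxy : G.Adj (f (a-1)) (f (a+1))
  · exact ⟨hne, Or.inl hxy⟩
  have hnxu : ¬ G.Adj (f (a-1)) u := by
    intro h
    have h1 : G.Adj ((fun i : ZMod m => f (-i)) (-a)) u := by
      show G.Adj (f (-(-a))) u
      rw [neg_neg]
      exact hadjau
    have h2 : G.Adj u ((fun i : ZMod m => f (-i)) (-a + 1)) := by
      show G.Adj u (f (-(-a + 1)))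
      rw [show (-(-a + 1) : ZMod m) = a - 1 by ring]
      exact h.symm
    exact K2 (revC hC) hRg hu h1 hu h2
  have hnyu : ¬ G.Adj (f (a+1)) u := fun h => K2 hC hR hu hadjau hu h.symm
  have hclaw : IsClaw G (f a) (f (a-1)) (f (a+1)) u := by
    refine ⟨?_, hadj a, hadjau, hxy, hnxu, hnyu, hne, ?_, ?_⟩
    · have := (hadj (a-1)).symm
      rwa [sub_add_cancel] at this
    · intro h
      exact hR.2.1 hu ⟨a-1, h⟩
    · intro h
      exact hR.2.1 hu ⟨a+1, h⟩
  rcases hch (f a) _ _ _ hclaw with h | h | h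
  · exact ⟨hne, Or.inr h⟩
  · omega
  · omega

end Lemma3Aux

/-- Lemma 3(g),(h): if moreover `G` is 2-connected and claw-heavy, then
`v_i⁻v_i⁺ ∈ Ẽ(G)`, `v_j⁻v_j⁺ ∈ Ẽ(G)`, and at least one of them is an actual
edge of `G`. -/
theorem lemma3gh {V : Type*} [Fintype V] [DecidableEq V] (G : SimpleGraph V)
    (h3 : 3 ≤ Fintype.card V)
    (h2conn : ∀ v : V, (G.induce {v}ᶜ).Connected)
    (hch : ClawHeavy G)
    (hnh : ¬ G.IsHamiltonian)
    (m : ℕ) (f : ZMod m → V) (hC : IsLongestCycleMap G m f)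
    (R : Set V) (hR : IsCompOf G (Set.range f)ᶜ R)
    (a b : ZMod m) (hab : a ≠ b)
    (p : G.Walk (f a) (f b)) (hp : p.IsPath) (hlen : 2 ≤ p.length)
    (hint : ∀ x ∈ p.support, x ≠ f a → x ≠ f b → x ∈ R) :
    TEdge G (f (a - 1)) (f (a + 1)) ∧ TEdge G (f (b - 1)) (f (b + 1)) ∧
      (G.Adj (f (a - 1)) (f (a + 1)) ∨ G.Adj (f (b - 1)) (f (b + 1))) := by
  obtain ⟨hm3, hfi, hadj⟩ := Lemma3Aux.basicfacts hC
  haveI : NeZero m := ⟨by omega⟩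
  have hfab : f a ≠ f b := fun h => hab (hfi h)
  have hRg : IsCompOf G (Set.range (fun i : ZMod m => f (-i)))ᶜ R := by
    rw [Lemma3Aux.revRange (f := f)]
    exact hR
  have hlenr : 2 ≤ p.reverse.length := by rwa [SimpleGraph.Walk.length_reverse]
  have hint' : ∀ x ∈ p.reverse.support, x ≠ f b → x ≠ f a → x ∈ R := by
    intro x hx h1 h2
    exact hint x (by rwa [SimpleGraph.Walk.support_reverse, List.mem_reverse] at hx) h2 h1
  obtain ⟨hneA, hgA⟩ := Lemma3Aux.sideG hC hR hab p hp hlen hint hch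
  obtain ⟨hneB, hgB⟩ := Lemma3Aux.sideG hC hR hab.symm p.reverse hp.reverse hlenr hint' hch
  refine ⟨⟨hneA, hgA⟩, ⟨hneB, hgB⟩, ?_⟩
  by_contra hcon
  push_neg at hcon
  obtain ⟨hnadjA, hnadjB⟩ := hcon
  have hdA := hgA.resolve_left hnadjA
  have hdB := hgB.resolve_left hnadjB
  obtain ⟨u, hu, hadjau⟩ := Lemma3Aux.extractU hC hR p hp hlen hint hfab
  obtain ⟨u', hu', hadjbu'⟩ :=
    Lemma3Aux.extractU hC hR p.reverse hp.reverse hlenr hint' hfab.symm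
  set s : ℕ := (b - a).val with hs
  have hbs : b = a + (s : ZMod m) := by rw [hs, ZMod.natCast_zmod_val]; ring
  have hslt : s < m := ZMod.val_lt _
  have hs0 : s ≠ 0 := by
    intro h
    rw [h] at hbs
    simp only [Nat.cast_zero, add_zero] at hbs
    exact hab hbs.symm
  have hs1 : s ≠ 1 := by
    intro h
    refine Lemma3Aux.K4 hC hR p hp hlen hint ?_
    rw [hbs, h]
    norm_num
  have hsm1 : s ≠ m - 1 := by
    intro h
    refine Lemma3Aux.K4 hC hR p.reverse hp.reverse hlenr hint' ?_
    rw [hbs, h, Lemma3Aux.castm1 (show 1 ≤ m by omega)]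
    ring
  have hs2 : 2 ≤ s := by omega
  have hsmle : s ≤ m - 2 := by omega
  have hcase : Fintype.card V ≤ (G.neighborSet (f (a+1))).ncard
        + (G.neighborSet (f (b+1))).ncard ∨
      Fintype.card V ≤ (G.neighborSet (f (a-1))).ncard
        + (G.neighborSet (f (b-1))).ncard := by
    omega
  rcases hcase with hcase | hcase
  · have := Lemma3Aux.CntB hC hR p hp hlen hint hs2 hsmle hbs hu hu' hadjau hadjbu'
    omega
  · have e1 : f a = (fun i : ZMod m => f (-i)) (-a) := by
      show _ = f (-(-a)); rw [neg_neg]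
    have e2 : f b = (fun i : ZMod m => f (-i)) (-b) := by
      show _ = f (-(-b)); rw [neg_neg]
    have hpp : (p.copy e1 e2).IsPath := by rw [SimpleGraph.Walk.isPath_copy]; exact hp
    have hlen2 : 2 ≤ (p.copy e1 e2).length := by
      rw [SimpleGraph.Walk.length_copy]; exact hlen
    have hint2 : ∀ x ∈ (p.copy e1 e2).support,
        x ≠ (fun i : ZMod m => f (-i)) (-a) → x ≠ (fun i : ZMod m => f (-i)) (-b) → x ∈ R := by
      intro x hx h1 h2
      rw [SimpleGraph.Walk.support_copy] at hx
      exact hint x hx (by rwa [e1]) (by rwa [e2])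
    have hbs' : (-b : ZMod m) = -a + ((m - s : ℕ) : ZMod m) := by
      rw [Nat.cast_sub (by omega : s ≤ m), ZMod.natCast_self, hbs]
      push_cast; ring
    have hu2 : G.Adj ((fun i : ZMod m => f (-i)) (-a)) u := by rw [← e1]; exact hadjau
    have hu2' : G.Adj ((fun i : ZMod m => f (-i)) (-b)) u' := by rw [← e2]; exact hadjbu'
    have hcnt := Lemma3Aux.CntB (Lemma3Aux.revC hC) hRg (p.copy e1 e2) hpp hlen2 hint2
      (show 2 ≤ m - s by omega) (show m - s ≤ m - 2 by omega) hbs' hu hu' hu2 hu2'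
    rw [show (-(-a + 1) : ZMod m) = a - 1 by ring,
      show (-(-b + 1) : ZMod m) = b - 1 by ring] at hcnt
    omega
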